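/- Let f be a smooth function of z on [0,∞), let c ≥ 0 and α ∈ (0,1), ε > 0, and suppose |f'(z)| ≤ 2ε(z+c)^α for all z > 0. Then for all z > 0, |f(z) - (1/(z+c))∫₀^z f(z') dz'| ≤ (ε(z+c)^{1+α})/(1+α/2) + |f(0)|. -/

import Mathlib

open Real Set MeasureTheory

/-- Lemma 6.6 (tl2) of the paper: if `|f'(z)| ≤ 2ε(z+c)^α` on `(0,∞)`, then
`|f(z) - (1/(z+c))∫₀^z f| ≤ ε(z+c)^{1+α}/(1+α/2) + |f(0)|` for `z > 0`. -/
theorem average_deviation_bound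
    (f f' : ℝ → ℝ) (c ε α : ℝ)
    (hc : 0 ≤ c) (hα : α ∈ Set.Ioo (0:ℝ) 1) (hε : 0 < ε)
    (hderiv : ∀ z ∈ Set.Ici (0:ℝ), HasDerivAt f (f' z) z)
    (hcont : ContinuousOn f' (Set.Ici (0:ℝ)))
    (hbound : ∀ z > (0:ℝ), |f' z| ≤ 2 * ε * (z + c) ^ α) :
    ∀ z > (0:ℝ),
      |f z - (1 / (z + c)) * ∫ t in (0:ℝ)..z, f t| ≤
        ε * (z + c) ^ (1 + α) / (1 + α / 2) + |f 0| := by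
  obtain ⟨hα0, hα1⟩ := hα
  intro z hz
  have hzc : (0:ℝ) < z + c := by linarith
  have hα1' : (0:ℝ) < α + 1 := by linarith
  have hα2' : (0:ℝ) < α + 2 := by linarith
  have hfc : ContinuousOn f (Ici 0) := fun x hx =>
    (hderiv x hx).continuousAt.continuousWithinAt
  have hgcont : Continuous (fun s : ℝ => 2 * ε * (s + c) ^ α) :=
    continuous_const.mul ((continuous_add_right c).rpow_const
      fun x => Or.inr hα0.le)
  -- value of the bound integral
  have hIb : ∀ t : ℝ, (∫ s in t..z, 2 * ε * (s + c) ^ α) =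
      2 * ε / (α + 1) * ((z + c) ^ (α + 1) - (t + c) ^ (α + 1)) := by
    intro t
    rw [intervalIntegral.integral_const_mul,
      intervalIntegral.integral_comp_add_right (fun x => x ^ α) c,
      integral_rpow (Or.inl (by linarith))]
    field_simp
  -- key estimate
  have key : ∀ t : ℝ, 0 ≤ t → t ≤ z → |f z - f t| ≤
      2 * ε / (α + 1) * ((z + c) ^ (α + 1) - (t + c) ^ (α + 1)) := by
    intro t ht htz
    have hsub : uIcc t z ⊆ Ici 0 := by
      rw [uIcc_of_le htz]; exact fun s hs => le_trans ht hs.1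
    have hint : IntervalIntegrable f' volume t z :=
      (hcont.mono hsub).intervalIntegrable
    have hftc : ∫ s in t..z, f' s = f z - f t :=
      intervalIntegral.integral_eq_sub_of_hasDerivAt
        (fun s hs => hderiv s (hsub hs)) hint
    have hb : ∀ᵐ s ∂volume.restrict (Set.uIoc t z), ‖f' s‖ ≤ 2 * ε * (s + c) ^ α := by
      rw [uIoc_of_le htz]
      refine (ae_restrict_iff' measurableSet_Ioc).mpr (ae_of_all _ ?_)
      intro s hs
      rw [Real.norm_eq_abs]
      exact hbound s (lt_of_le_of_lt ht hs.1)
    have hmono := Real.rpow_le_rpow (by linarith : (0:ℝ) ≤ t + c)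
      (by linarith : t + c ≤ z + c) hα1'.le
    have hnn : 0 ≤ 2 * ε / (α + 1) * ((z + c) ^ (α + 1) - (t + c) ^ (α + 1)) := by
      have hs : (0:ℝ) ≤ (z + c) ^ (α + 1) - (t + c) ^ (α + 1) := by linarith
      positivity
    have := intervalIntegral.norm_integral_le_abs_of_norm_le hb
      (hgcont.intervalIntegrable t z)
    rw [hftc, hIb, abs_of_nonneg hnn] at this
    exact this
  set P := (z + c) ^ (α + 1) with hPdef
  set Q := c ^ (α + 1) with hQdef
  have hPpos : 0 < P := Real.rpow_pos_of_pos hzc _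
  have hQP : Q ≤ P := Real.rpow_le_rpow hc (by linarith) hα1'.le
  have hQ0 : 0 ≤ Q := Real.rpow_nonneg hc _
  have hfint : IntervalIntegrable f volume 0 z :=
    (hfc.mono (by rw [uIcc_of_le hz.le]; exact fun s hs => hs.1)).intervalIntegrable
  -- identity
  have hiden : f z - (1 / (z + c)) * ∫ t in (0:ℝ)..z, f t
      = (1 / (z + c)) * ((∫ t in (0:ℝ)..z, (f z - f t)) + c * f z) := by
    rw [intervalIntegral.integral_sub intervalIntegrable_const hfint]
    simp only [intervalIntegral.integral_const, smul_eq_mul, sub_zero]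
    field_simp
    ring
  -- bound on the inner integral
  have hg2cont : Continuous (fun t : ℝ => 2 * ε / (α + 1) * (P - (t + c) ^ (α + 1))) :=
    continuous_const.mul (continuous_const.sub
      ((continuous_add_right c).rpow_const fun x => Or.inr hα1'.le))
  have hb2 : |∫ t in (0:ℝ)..z, (f z - f t)| ≤
      |∫ t in (0:ℝ)..z, 2 * ε / (α + 1) * (P - (t + c) ^ (α + 1))| := by
    have hb : ∀ᵐ t ∂volume.restrict (Set.uIoc (0:ℝ) z), ‖f z - f t‖ ≤
        2 * ε / (α + 1) * (P - (t + c) ^ (α + 1)) := by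
      rw [uIoc_of_le hz.le]
      refine (ae_restrict_iff' measurableSet_Ioc).mpr (ae_of_all _ ?_)
      intro t ht
      rw [Real.norm_eq_abs]
      exact key t ht.1.le ht.2
    exact intervalIntegral.norm_integral_le_abs_of_norm_le hb (hg2cont.intervalIntegrable 0 z)
  have hVnn : (0:ℝ) ≤ ∫ t in (0:ℝ)..z, 2 * ε / (α + 1) * (P - (t + c) ^ (α + 1)) := by
    apply intervalIntegral.integral_nonneg hz.le
    intro u hu
    have hmono := Real.rpow_le_rpow (by linarith [hu.1] : (0:ℝ) ≤ u + c)
      (by linarith [hu.2] : u + c ≤ z + c) hα1'.le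
    have hs : (0:ℝ) ≤ P - (u + c) ^ (α + 1) := by rw [hPdef]; linarith
    positivity
  have hval : (∫ t in (0:ℝ)..z, 2 * ε / (α + 1) * (P - (t + c) ^ (α + 1)))
      = 2 * ε / (α + 1) * (z * P - ((z + c) * P - c * Q) / (α + 2)) := by
    have hzc2 : (z + c) ^ (α + 2) = (z + c) * P := by
      rw [hPdef, show α + 2 = (α + 1) + 1 by ring, Real.rpow_add_one hzc.ne']
      ring
    have hc2 : c ^ (α + 2) = c * Q := by
      rcases eq_or_lt_of_le hc with h | h
      · rw [← h, Real.zero_rpow (by positivity : α + 2 ≠ 0)]; ring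
      · rw [hQdef, show α + 2 = (α + 1) + 1 by ring, Real.rpow_add_one h.ne']; ring
    have hpow : (∫ t in (0:ℝ)..z, (t + c) ^ (α + 1))
        = ((z + c) * P - c * Q) / (α + 2) := by
      rw [intervalIntegral.integral_comp_add_right (fun x => x ^ (α + 1)) c,
        integral_rpow (Or.inl (by linarith)), zero_add,
        show α + 1 + 1 = α + 2 by ring, hzc2, hc2]
    rw [intervalIntegral.integral_const_mul,
      intervalIntegral.integral_sub intervalIntegrable_const
        (((continuous_add_right c).rpow_const
          fun x => Or.inr hα1'.le).intervalIntegrable 0 z),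
      hpow]
    simp only [intervalIntegral.integral_const, smul_eq_mul, sub_zero]
  have hInn : |∫ t in (0:ℝ)..z, (f z - f t)| ≤
      2 * ε / (α + 1) * (z * P - ((z + c) * P - c * Q) / (α + 2)) := by
    calc |∫ t in (0:ℝ)..z, (f z - f t)| ≤ _ := hb2
      _ = ∫ t in (0:ℝ)..z, 2 * ε / (α + 1) * (P - (t + c) ^ (α + 1)) :=
          abs_of_nonneg hVnn
      _ = _ := hval
  have hF : |f z| ≤ 2 * ε / (α + 1) * (P - Q) + |f 0| := by
    have h0 := key 0 le_rfl hz.le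
    rw [zero_add] at h0
    calc |f z| = |(f z - f 0) + f 0| := by ring_nf
      _ ≤ |f z - f 0| + |f 0| := abs_add_le _ _
      _ ≤ 2 * ε / (α + 1) * (P - Q) + |f 0| := by linarith [h0]
  -- put everything together
  rw [hiden, show (1:ℝ) + α = α + 1 by ring]
  rw [abs_mul, abs_of_pos (by positivity : (0:ℝ) < 1 / (z + c))]
  have habs : |(∫ t in (0:ℝ)..z, (f z - f t)) + c * f z| ≤
      |∫ t in (0:ℝ)..z, (f z - f t)| + c * |f z| := by
    calc |(∫ t in (0:ℝ)..z, (f z - f t)) + c * f z|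
        ≤ |∫ t in (0:ℝ)..z, (f z - f t)| + |c * f z| := abs_add_le _ _
      _ = |∫ t in (0:ℝ)..z, (f z - f t)| + c * |f z| := by
          rw [abs_mul, abs_of_nonneg hc]
  have hstep : |(∫ t in (0:ℝ)..z, (f z - f t)) + c * f z| ≤
      2 * ε / (α + 1) * (z * P - ((z + c) * P - c * Q) / (α + 2))
        + c * (2 * ε / (α + 1) * (P - Q) + |f 0|) := by
    have := mul_le_mul_of_nonneg_left hF hc
    linarith
  have hmain : 2 * ε / (α + 1) * (z * P - ((z + c) * P - c * Q) / (α + 2))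
        + c * (2 * ε / (α + 1) * (P - Q) + |f 0|)
      ≤ (z + c) * (ε * P / (1 + α / 2) + |f 0|) := by
    have h1 : c * |f 0| ≤ (z + c) * |f 0| := by
      apply mul_le_mul_of_nonneg_right (by linarith) (abs_nonneg _)
    have h2 : 2 * ε / (α + 1) * (z * P - ((z + c) * P - c * Q) / (α + 2))
        + c * (2 * ε / (α + 1) * (P - Q)) ≤ (z + c) * (ε * P / (1 + α / 2)) := by
      have e1 : (z + c) * (ε * P / (1 + α / 2)) = 2 * ε * ((z + c) * P) / (α + 2) := by
        rw [eq_div_iff hα2'.ne']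
        field_simp
        ring
      have e2 : 2 * ε / (α + 1) * (z * P - ((z + c) * P - c * Q) / (α + 2))
          + c * (2 * ε / (α + 1) * (P - Q)) = 2 * ε * ((z + c) * P - c * Q) / (α + 2) := by
        field_simp
        ring
      rw [e1, e2]
      apply (div_le_div_iff_of_pos_right hα2').mpr
      nlinarith [mul_nonneg (mul_nonneg hε.le hc) hQ0]
    linarith
  calc (1 / (z + c)) * |(∫ t in (0:ℝ)..z, (f z - f t)) + c * f z|
      ≤ (1 / (z + c)) * ((z + c) * (ε * P / (1 + α / 2) + |f 0|)) := by
        apply mul_le_mul_of_nonneg_left _ (by positivity)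
        exact le_trans hstep hmain
    _ = ε * P / (1 + α / 2) + |f 0| := by field_simp
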